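/- For every integer s ≥ 2 and every integer r ≥ 4, there exists a finite subset S of F_2^{(s−1)r+s} containing the zero vector such that: (i) the simple graph G on vertex set F_2^{(s−1)r+s}, in which distinct vertices u and w are adjacent if and only if u + w ∈ S, is connected and triangle-free (contains no 3-clique); and (ii) the matrix A over F_2, with rows and columns indexed by F_2^{(s−1)r+s} and entries A_{u,w} = 1 if u + w ∈ S and 0 otherwise, has rank over F_2 at most 2^{(s−1)r} + 2^{(s−2)r+s+1}. Consequently, the binary storage code ker(A) on the N = 2^{(s−1)r+s} vertices of the triangle-free graph G has rate at least 1 − 2^{−s} − 2^{−(r−1)}. -/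

import Mathlib

namespace SCP

private lemma zmod2_cases (a : ZMod 2) : a = 0 ∨ a = 1 := by revert a; decide
private lemma zmod2_add_self (a : ZMod 2) : a + a = 0 := by revert a; decide
private lemma zmod2_one_ne_zero : (1 : ZMod 2) ≠ 0 := by decide
private lemma zmod2_eq_one_of_ne_zero {a : ZMod 2} (h : a ≠ 0) : a = 1 :=
  (zmod2_cases a).resolve_left h
private lemma zmod2_add_eq_zero {x y : ZMod 2} (h : x + y = 0) : x = y := by
  revert h; revert x y; decide

variable (s r : ℕ)

abbrev nn : ℕ := (s - 1) * r + s
abbrev VV := Fin ((s - 1) * r + s) → ZMod 2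

lemma s_le_nn : s ≤ nn s r := Nat.le_add_left s _

abbrev inBlock (b i : ℕ) : Prop := s + b * r ≤ i ∧ i < s + b * r + r
abbrev uZero (v : VV s r) : Prop := ∀ i : Fin (nn s r), s ≤ (i : ℕ) → v i = 0
abbrev level0 (v : VV s r) : Prop :=
  (∀ i : Fin (nn s r), (i : ℕ) = 0 → v i = 1) ∧ uZero s r v
abbrev cosetB (b : ℕ) (v : VV s r) : Prop :=
  (∀ i : Fin (nn s r), (i : ℕ) ≤ b → v i = 0) ∧
  (∀ i : Fin (nn s r), (i : ℕ) = b + 1 → v i = 1) ∧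
  (∀ i : Fin (nn s r), s ≤ (i : ℕ) → ¬ inBlock s r b (i : ℕ) → v i = 0)
abbrev lvl (b : ℕ) (v : VV s r) : Prop :=
  cosetB s r b v ∧ ∃ i : Fin (nn s r), inBlock s r b (i : ℕ) ∧ v i ≠ 0
abbrev memS (v : VV s r) : Prop :=
  v = 0 ∨ level0 s r v ∨ ∃ b, b + 1 < s ∧ lvl s r b v

lemma vadd_self (v : VV s r) : v + v = 0 := by
  funext i; exact zmod2_add_self (v i)
lemma vadd_eq_zero_iff {a b : VV s r} : a + b = 0 ↔ a = b := by
  constructor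
  · intro h; funext i; exact zmod2_add_eq_zero (congrFun h i)
  · rintro rfl; exact vadd_self s r a

lemma inBlock_disj {b b' i : ℕ} (h : inBlock s r b i) (h' : inBlock s r b' i) : b = b' := by
  rcases Nat.lt_trichotomy b b' with hlt | he | hgt
  · exfalso
    have h2 : (b + 1) * r ≤ b' * r := Nat.mul_le_mul_right r (by omega)
    rw [Nat.succ_mul] at h2; omega
  · exact he
  · exfalso
    have h2 : (b' + 1) * r ≤ b * r := Nat.mul_le_mul_right r (by omega)
    rw [Nat.succ_mul] at h2; omega

lemma inBlock_s_le {b i : ℕ} (h : inBlock s r b i) : s ≤ i := by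
  have := h.1; omega

lemma block_coord_lt {b j : ℕ} (hb : b + 1 < s) (hj : j < r) :
    s + b * r + j < nn s r := by
  have h2 : (b + 1) * r ≤ (s - 1) * r := Nat.mul_le_mul_right r (by omega)
  rw [Nat.succ_mul] at h2
  unfold nn; omega

def fin0 (hs : 2 ≤ s) : Fin (nn s r) := ⟨0, by unfold nn; omega⟩
def tc (b : ℕ) (hb : b + 1 < s) : Fin (nn s r) :=
  ⟨b + 1, lt_of_lt_of_le hb (s_le_nn s r)⟩

/-! ### Sum-freeness -/

section SumFree

/-- If `x` is in `S`, has 0 first coordinate, and all u-coords zero, then `x = 0`. -/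
lemma memS_zero_of (hs : 2 ≤ s) (hx : memS s r x) (h0 : x (fin0 s r hs) = 0) (hu : uZero s r x) :
    x = 0 := by
  rcases hx with h | h | ⟨b, hb, hc, i, hi, hne⟩
  · exact h
  · exact absurd (h.1 (fin0 s r hs) rfl) (by rw [h0]; exact fun h' => zmod2_one_ne_zero h'.symm)
  · exact absurd (hu i (inBlock_s_le s r hi)) hne

/-- level0 + level0 -/
lemma notMem_L_L (hs : 2 ≤ s) {a b : VV s r} (ha : level0 s r a) (hb : level0 s r b) (hne : a ≠ b) :
    ¬ memS s r (a + b) := by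
  intro hmem
  have h0 : (a + b) (fin0 s r hs) = 0 := by
    have := ha.1 (fin0 s r hs) rfl
    have := hb.1 (fin0 s r hs) rfl
    show a _ + b _ = 0
    rw [ha.1 (fin0 s r hs) rfl, hb.1 (fin0 s r hs) rfl]; decide
  have hu : uZero s r (a + b) := by
    intro i hi
    show a i + b i = 0
    rw [ha.2 i hi, hb.2 i hi, add_zero]
  exact hne (vadd_eq_zero_iff s r |>.mp (memS_zero_of s r hs hmem h0 hu))

/-- level0 + lvl -/
lemma notMem_L_lvl (hs : 2 ≤ s) {a b : VV s r} {bb : ℕ} (ha : level0 s r a) (hb : lvl s r bb b) :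
    ¬ memS s r (a + b) := by
  intro hmem
  obtain ⟨i, hiB, hine⟩ := hb.2
  have hsle : s ≤ (i : ℕ) := inBlock_s_le s r hiB
  have hci : (a + b) i ≠ 0 := by
    show a i + b i ≠ 0
    rw [ha.2 i hsle, zero_add]; exact hine
  have hc0 : (a + b) (fin0 s r hs) = 1 := by
    show a _ + b _ = 1
    rw [ha.1 (fin0 s r hs) rfl, hb.1.1 (fin0 s r hs) (by simp [fin0]), add_zero]
  rcases hmem with h | h | ⟨b'', hb'', hc, j, hj, hjne⟩
  · rw [h] at hci; exact hci rfl
  · exact hci (h.2 i hsle)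
  · have := hc.1 (fin0 s r hs) (by simp [fin0])
    rw [hc0] at this; exact zmod2_one_ne_zero this

/-- lvl + lvl, different blocks -/
lemma notMem_lvl_lvl_ne {a b : VV s r} {ba bb : ℕ} (ha : lvl s r ba a) (hb : lvl s r bb b)
    (hne : ba ≠ bb) : ¬ memS s r (a + b) := by
  intro hmem
  obtain ⟨i, hiB, hine⟩ := ha.2
  obtain ⟨j, hjB, hjne⟩ := hb.2
  have hsi : s ≤ (i : ℕ) := inBlock_s_le s r hiB
  have hsj : s ≤ (j : ℕ) := inBlock_s_le s r hjB
  have hci : (a + b) i ≠ 0 := by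
    show a i + b i ≠ 0
    rw [hb.1.2.2 i hsi (fun h => hne (inBlock_disj s r hiB h)), add_zero]
    exact hine
  have hcj : (a + b) j ≠ 0 := by
    show a j + b j ≠ 0
    rw [ha.1.2.2 j hsj (fun h => hne (inBlock_disj s r h hjB)), zero_add]
    exact hjne
  rcases hmem with h | h | ⟨b'', hb'', hc, k, hk, hkne⟩
  · rw [h] at hci; exact hci rfl
  · exact hci (h.2 i hsi)
  · rcases eq_or_ne ba b'' with he | hne'
    · subst he
      exact hcj (hc.2.2 j hsj (fun h => hne (inBlock_disj s r h hjB)))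
    · exact hci (hc.2.2 i hsi (fun h => hne' (inBlock_disj s r hiB h)))

/-- lvl + lvl, same block -/
lemma notMem_lvl_lvl_eq (hs : 2 ≤ s) {a b : VV s r} {bb : ℕ} (hbb : bb + 1 < s)
    (ha : lvl s r bb a) (hb : lvl s r bb b) (hne : a ≠ b) :
    ¬ memS s r (a + b) := by
  intro hmem
  have htc : (a + b) (tc s r bb hbb) = 0 := by
    show a _ + b _ = 0
    rw [ha.1.2.1 _ rfl, hb.1.2.1 _ rfl]; decide
  have hc0 : (a + b) (fin0 s r hs) = 0 := by
    show a _ + b _ = 0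
    rw [ha.1.1 _ (by simp [fin0]), hb.1.1 _ (by simp [fin0]), add_zero]
  have hout : ∀ i : Fin (nn s r), s ≤ (i : ℕ) → ¬ inBlock s r bb (i : ℕ) → (a + b) i = 0 := by
    intro i hi hni
    show a i + b i = 0
    rw [ha.1.2.2 i hi hni, hb.1.2.2 i hi hni, add_zero]
  by_cases hbl : ∃ i : Fin (nn s r), inBlock s r bb (i : ℕ) ∧ (a + b) i ≠ 0
  · obtain ⟨i, hiB, hine⟩ := hbl
    rcases hmem with h | h | ⟨b'', hb'', hc, k, hk, hkne⟩
    · rw [h] at hine; exact hine rfl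
    · exact hine (h.2 i (inBlock_s_le s r hiB))
    · rcases eq_or_ne bb b'' with he | hne'
      · subst he
        have := hc.2.1 (tc s r bb hbb) rfl
        rw [htc] at this; exact zmod2_one_ne_zero this.symm
      · exact hine (hc.2.2 i (inBlock_s_le s r hiB) (fun h => hne' (inBlock_disj s r hiB h)))
  · push_neg at hbl
    have hu : uZero s r (a + b) := by
      intro i hi
      by_cases h : inBlock s r bb (i : ℕ)
      · by_contra hne'; exact hne' (hbl i h)
      · exact hout i hi h
    exact hne (vadd_eq_zero_iff s r |>.mp (memS_zero_of s r hs hmem hc0 hu))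

/-- Main sum-freeness: distinct nonzero elements of S sum outside S. -/
lemma sum_free (hs : 2 ≤ s) {a b : VV s r} (ha : memS s r a) (hb : memS s r b)
    (ha0 : a ≠ 0) (hb0 : b ≠ 0) (hne : a ≠ b) : ¬ memS s r (a + b) := by
  have hA := ha.resolve_left ha0
  have hB := hb.resolve_left hb0
  rcases hA with hA | ⟨ba, hba, hA⟩
  · rcases hB with hB | ⟨bb, hbb, hB⟩
    · exact notMem_L_L s r hs hA hB hne
    · exact notMem_L_lvl s r hs hA hB
  · rcases hB with hB | ⟨bb, hbb, hB⟩
    · rw [add_comm]; exact notMem_L_lvl s r hs hB hA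
    · rcases eq_or_ne ba bb with he | hne'
      · subst he; exact notMem_lvl_lvl_eq s r hs hba hA hB hne
      · exact notMem_lvl_lvl_ne s r hA hB hne'

end SumFree

/-! ### Parity identity -/

open Classical in
noncomputable def S : Finset (VV s r) :=
  @Finset.filter _ (memS s r) (Classical.decPred _) Finset.univ

lemma mem_S {v : VV s r} : v ∈ S s r ↔ memS s r v := by
  classical
  simp [S]

lemma cosetB_unique {x : VV s r} {b b' : ℕ} (hb : b + 1 < s) (hb' : b' + 1 < s)
    (h : cosetB s r b x) (h' : cosetB s r b' x) : b = b' := by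
  by_contra hne
  rcases Nat.lt_or_ge b b' with hlt | hge
  · have h1 := h.2.1 (tc s r b hb) rfl
    have h2 := h'.1 (tc s r b hb) (by simp [tc]; omega)
    rw [h1] at h2; exact zmod2_one_ne_zero h2
  · have hlt : b' < b := by omega
    have h1 := h'.2.1 (tc s r b' hb') rfl
    have h2 := h.1 (tc s r b' hb') (by simp [tc]; omega)
    rw [h1] at h2; exact zmod2_one_ne_zero h2

/-- T1 : uZero and some cosetB implies not in S -/
lemma T1 {x : VV s r} (hs : 2 ≤ s) (hu : uZero s r x)
    (hex : ∃ b, b + 1 < s ∧ cosetB s r b x) : ¬ memS s r x := by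
  obtain ⟨b, hb, hc⟩ := hex
  intro hm
  rcases hm with h | h | ⟨b', hb', hc', i, hi, hine⟩
  · have := hc.2.1 (tc s r b hb) rfl
    rw [h] at this
    exact zmod2_one_ne_zero this.symm
  · have h1 := h.1 (fin0 s r hs) rfl
    have h2 := hc.1 (fin0 s r hs) (by simp [fin0])
    rw [h1] at h2; exact zmod2_one_ne_zero h2
  · exact hine (hu i (inBlock_s_le s r hi))

/-- T2 : uZero and no cosetB implies in S -/
lemma T2 {x : VV s r} (hs : 2 ≤ s) (hu : uZero s r x)
    (hex : ¬ ∃ b, b + 1 < s ∧ cosetB s r b x) : memS s r x := by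
  rcases zmod2_cases (x (fin0 s r hs)) with h0 | h1
  · -- show x = 0
    left
    have hz : ∀ kv, kv < s → ∀ i : Fin (nn s r), (i : ℕ) = kv → x i = 0 := by
      intro kv
      induction kv using Nat.strong_induction_on with
      | _ kv ih =>
        intro hkv i hi
        by_contra hne
        have hx1 : x i = 1 := zmod2_eq_one_of_ne_zero hne
        match kv, hi, hkv with
        | 0, hi, hkv =>
          have : i = fin0 s r hs := Fin.ext (by simp [fin0, hi])
          rw [this, h0] at hx1; exact zmod2_one_ne_zero hx1.symm
        | (m+1), hi, hkv =>
          apply hex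
          refine ⟨m, by omega, ?_, ?_, ?_⟩
          · intro i' hi'
            exact ih (i' : ℕ) (by omega) (by omega) i' rfl
          · intro i' hi'
            have : i' = i := Fin.ext (by omega)
            rw [this]; exact hx1
          · intro i' hi' _
            exact hu i' hi'
    funext i
    by_cases hsi : s ≤ (i : ℕ)
    · exact hu i hsi
    · exact hz (i : ℕ) (by omega) i rfl
  · -- level0
    right; left
    exact ⟨fun i hi => by rwa [show i = fin0 s r hs from Fin.ext (by simp [fin0, hi])], hu⟩

/-- T3 -/
lemma T3 {x : VV s r} (hu : ¬ uZero s r x)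
    (hex : ∃ b, b + 1 < s ∧ cosetB s r b x) : memS s r x := by
  obtain ⟨b, hb, hc⟩ := hex
  right; right
  refine ⟨b, hb, hc, ?_⟩
  simp only [uZero, not_forall] at hu
  obtain ⟨i, hi, hine⟩ := hu
  refine ⟨i, ?_, hine⟩
  by_contra hni
  exact hine (hc.2.2 i hi hni)

/-- T4 -/
lemma T4 {x : VV s r} (hu : ¬ uZero s r x)
    (hex : ¬ ∃ b, b + 1 < s ∧ cosetB s r b x) : ¬ memS s r x := by
  intro hm
  rcases hm with h | h | ⟨b, hb, hc, _⟩
  · exact hu (fun i _ => by rw [h]; rfl)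
  · exact hu h.2
  · exact hex ⟨b, hb, hc⟩

/-- The key parity identity. -/
lemma parity_key (hs : 2 ≤ s) (x : VV s r) :
    (if x ∈ S s r then (1 : ZMod 2) else 0) =
      (if uZero s r x then (1 : ZMod 2) else 0) +
        ∑ b ∈ Finset.range (s - 1), (if cosetB s r b x then (1 : ZMod 2) else 0) := by
  classical
  have hsum : (∑ b ∈ Finset.range (s - 1), (if cosetB s r b x then (1 : ZMod 2) else 0)) =
      (if ∃ b, b + 1 < s ∧ cosetB s r b x then (1 : ZMod 2) else 0) := by
    by_cases hex : ∃ b, b + 1 < s ∧ cosetB s r b x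
    · obtain ⟨b0, hb0, hc0⟩ := hex
      rw [if_pos ⟨b0, hb0, hc0⟩]
      rw [Finset.sum_eq_single b0]
      · rw [if_pos hc0]
      · intro b hb hne
        have hblt : b + 1 < s := by have := Finset.mem_range.mp hb; omega
        rw [if_neg]
        intro hc
        exact hne (cosetB_unique s r hblt hb0 hc hc0)
      · intro hb0'
        exact absurd (Finset.mem_range.mpr (by omega)) hb0'
    · rw [if_neg hex, Finset.sum_eq_zero]
      intro b hb
      rw [if_neg]
      intro hc
      exact hex ⟨b, by have := Finset.mem_range.mp hb; omega, hc⟩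
  rw [hsum]
  by_cases hu : uZero s r x <;> by_cases hex : ∃ b, b + 1 < s ∧ cosetB s r b x
  · rw [if_pos hu, if_pos hex, if_neg (fun h => T1 s r hs hu hex (mem_S s r |>.mp h))]
    decide
  · rw [if_pos hu, if_neg hex, if_pos (mem_S s r |>.mpr (T2 s r hs hu hex))]
    decide
  · rw [if_neg hu, if_pos hex, if_pos (mem_S s r |>.mpr (T3 s r hu hex))]
    decide
  · rw [if_neg hu, if_neg hex, if_neg (fun h => T4 s r hu hex (mem_S s r |>.mp h))]
    decide

/-! ### Rank bounds -/

lemma rank_pattern {m : ℕ} (emb : Fin m → Fin (nn s r)) (c : Fin m → ZMod 2)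
    (P : VV s r → Prop) [DecidablePred P]
    (hP : ∀ x : VV s r, P x ↔ ∀ k : Fin m, x (emb k) = c k) :
    (Matrix.of fun u w : VV s r => if P (u + w) then (1 : ZMod 2) else 0).rank ≤ 2 ^ m := by
  classical
  set B : Matrix (VV s r) (Fin m → ZMod 2) (ZMod 2) :=
    Matrix.of fun u q => if ∀ k : Fin m, u (emb k) + q k = c k then (1 : ZMod 2) else 0 with hB
  set C : Matrix (Fin m → ZMod 2) (VV s r) (ZMod 2) :=
    Matrix.of fun q w => if (fun k => w (emb k)) = q then (1 : ZMod 2) else 0 with hC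
  have hBC : (Matrix.of fun u w : VV s r => if P (u + w) then (1 : ZMod 2) else 0) = B * C := by
    ext u w
    rw [Matrix.mul_apply]
    have h1 : (∑ q : Fin m → ZMod 2, B u q * C q w) = B u (fun k => w (emb k)) *
        C (fun k => w (emb k)) w := by
      refine Finset.sum_eq_single _ ?_ ?_
      · intro q _ hq
        have hcq : C q w = 0 := by
          rw [hC]
          simp only [Matrix.of_apply]
          rw [if_neg (fun he => hq he.symm)]
        rw [hcq, mul_zero]
      · intro h; exact absurd (Finset.mem_univ _) h
    rw [h1]
    have hc1 : C (fun k => w (emb k)) w = 1 := by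
      rw [hC]; simp
    rw [hc1, mul_one, hB]
    simp only [Matrix.of_apply]
    refine if_congr ?_ rfl rfl
    rw [hP]
    constructor
    · intro h k; have := h k; rwa [Pi.add_apply] at this
    · intro h k; rw [Pi.add_apply]; exact h k
  rw [hBC]
  refine le_trans (Matrix.rank_mul_le_left _ _) (le_trans (Matrix.rank_le_card_width _) ?_)
  rw [Fintype.card_fun]
  simp [ZMod.card]

lemma rank_add_le' (A B : Matrix (VV s r) (VV s r) (ZMod 2)) :
    (A + B).rank ≤ A.rank + B.rank := by
  have h : LinearMap.range (A + B).mulVecLin ≤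
      LinearMap.range A.mulVecLin ⊔ LinearMap.range B.mulVecLin := by
    rw [Matrix.mulVecLin_add]
    rintro x ⟨y, rfl⟩
    exact Submodule.mem_sup.mpr ⟨A.mulVecLin y, ⟨y, rfl⟩, B.mulVecLin y, ⟨y, rfl⟩, rfl⟩
  calc (A + B).rank
      ≤ Module.finrank (ZMod 2) ↥(LinearMap.range A.mulVecLin ⊔ LinearMap.range B.mulVecLin) :=
        Submodule.finrank_mono h
    _ ≤ A.rank + B.rank := Submodule.finrank_add_le_finrank_add_finrank _ _

lemma rank_sum_le {ι : Type} (t : Finset ι) (f : ι → Matrix (VV s r) (VV s r) (ZMod 2)) :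
    (∑ b ∈ t, f b).rank ≤ ∑ b ∈ t, (f b).rank := by
  classical
  induction t using Finset.induction_on with
  | empty => simp
  | insert _ _ hx ih =>
      rw [Finset.sum_insert hx, Finset.sum_insert hx]
      exact le_trans (rank_add_le' s r _ _) (Nat.add_le_add_left ih _)

/-! ### Embeddings of constrained coordinates -/

def embW (k : Fin ((s - 1) * r)) : Fin (nn s r) :=
  ⟨s + (k : ℕ), by have := k.isLt; unfold nn; omega⟩

lemma uZero_iff_embW (x : VV s r) :
    uZero s r x ↔ ∀ k : Fin ((s - 1) * r), x (embW s r k) = 0 := by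
  constructor
  · intro h k; exact h _ (by simp [embW])
  · intro h i hi
    have hk : (i : ℕ) - s < (s - 1) * r := by have := i.isLt; unfold nn at this; omega
    have he : i = embW s r ⟨(i : ℕ) - s, hk⟩ := Fin.ext (by simp [embW]; omega)
    rw [he]; exact h _

def vB (b : ℕ) (kv : ℕ) : ℕ :=
  if kv < b + 2 then kv
  else if kv - (b + 2) < b * r then s + (kv - (b + 2)) else s + (kv - (b + 2)) + r

lemma vB_low {b kv : ℕ} (h : kv < b + 2) : vB s r b kv = kv := by
  unfold vB; rw [if_pos h]

lemma vB_mid {b kv : ℕ} (h1 : ¬ kv < b + 2) (h2 : kv - (b + 2) < b * r) :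
    vB s r b kv = s + (kv - (b + 2)) := by
  unfold vB; rw [if_neg h1, if_pos h2]

lemma vB_high {b kv : ℕ} (h1 : ¬ kv < b + 2) (h2 : ¬ kv - (b + 2) < b * r) :
    vB s r b kv = s + (kv - (b + 2)) + r := by
  unfold vB; rw [if_neg h1, if_neg h2]

lemma sub_mul_aux (hs : 2 ≤ s) : (s - 2) * r + r = (s - 1) * r := by
  have h : s - 1 = (s - 2) + 1 := by omega
  rw [h, Nat.succ_mul]

lemma vB_lt (hs : 2 ≤ s) {b : ℕ} (hb : b + 1 < s) {kv : ℕ}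
    (hkv : kv < (s - 2) * r + b + 2) : vB s r b kv < nn s r := by
  have h1 := sub_mul_aux s r hs
  have h2 : b * r ≤ (s - 2) * r := Nat.mul_le_mul_right r (by omega)
  unfold vB nn
  split
  · omega
  · split <;> omega

def embB (hs : 2 ≤ s) {b : ℕ} (hb : b + 1 < s) (k : Fin ((s - 2) * r + b + 2)) :
    Fin (nn s r) :=
  ⟨vB s r b (k : ℕ), vB_lt s r hs hb k.isLt⟩

lemma cosetB_iff_embB (hs : 2 ≤ s) {b : ℕ} (hb : b + 1 < s) (x : VV s r) :
    cosetB s r b x ↔ ∀ k : Fin ((s - 2) * r + b + 2),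
      x (embB s r hs hb k) = (if (k : ℕ) = b + 1 then 1 else 0) := by
  constructor
  · rintro ⟨h1, h2, h3⟩ k
    by_cases hk : (k : ℕ) < b + 2
    · by_cases hk1 : (k : ℕ) = b + 1
      · rw [if_pos hk1]
        refine h2 _ ?_
        show vB s r b (k : ℕ) = b + 1
        rw [vB_low s r hk, hk1]
      · rw [if_neg hk1]
        refine h1 _ ?_
        show vB s r b (k : ℕ) ≤ b
        rw [vB_low s r hk]; omega
    · rw [if_neg (by omega)]
      by_cases hjb : (k : ℕ) - (b + 2) < b * r
      · refine h3 _ ?_ ?_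
        · show s ≤ vB s r b (k : ℕ)
          rw [vB_mid s r hk hjb]; omega
        · show ¬ inBlock s r b (vB s r b (k : ℕ))
          rw [vB_mid s r hk hjb]
          rintro ⟨hc1, hc2⟩; omega
      · refine h3 _ ?_ ?_
        · show s ≤ vB s r b (k : ℕ)
          rw [vB_high s r hk hjb]; omega
        · show ¬ inBlock s r b (vB s r b (k : ℕ))
          rw [vB_high s r hk hjb]
          rintro ⟨hc1, hc2⟩; omega
  · intro h
    refine ⟨?_, ?_, ?_⟩
    · intro i hi
      have hk : (i : ℕ) < (s - 2) * r + b + 2 := by omega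
      have he : embB s r hs hb ⟨(i : ℕ), hk⟩ = i := by
        apply Fin.ext
        show vB s r b (i : ℕ) = (i : ℕ)
        exact vB_low s r (by omega)
      have hh := h ⟨(i : ℕ), hk⟩
      rw [he] at hh
      rw [hh, if_neg (by simp; omega)]
    · intro i hi
      have hk : (i : ℕ) < (s - 2) * r + b + 2 := by omega
      have he : embB s r hs hb ⟨(i : ℕ), hk⟩ = i := by
        apply Fin.ext
        show vB s r b (i : ℕ) = (i : ℕ)
        exact vB_low s r (by omega)
      have hh := h ⟨(i : ℕ), hk⟩
      rw [he] at hh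
      rw [hh, if_pos (by simp [hi])]
    · intro i hi hni
      have hilt := i.isLt
      have h1 := sub_mul_aux s r hs
      have h2 : b * r ≤ (s - 2) * r := Nat.mul_le_mul_right r (by omega)
      by_cases hcase : (i : ℕ) - s < b * r
      · have hk : (b + 2) + ((i : ℕ) - s) < (s - 2) * r + b + 2 := by omega
        have he : embB s r hs hb ⟨(b + 2) + ((i : ℕ) - s), hk⟩ = i := by
          apply Fin.ext
          show vB s r b ((b + 2) + ((i : ℕ) - s)) = (i : ℕ)
          rw [vB_mid s r (by omega) (by omega)]; omega
        have hh := h ⟨(b + 2) + ((i : ℕ) - s), hk⟩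
        rw [he] at hh
        rw [hh, if_neg (by simp; omega)]
      · have hge : b * r + r ≤ (i : ℕ) - s := by
          have hnb : ¬ ((i : ℕ) < s + b * r + r) := fun hlt => hni ⟨by omega, hlt⟩
          omega
        have hklt : (b + 2) + (((i : ℕ) - s) - r) < (s - 2) * r + b + 2 := by
          unfold nn at hilt; omega
        have he : embB s r hs hb ⟨(b + 2) + (((i : ℕ) - s) - r), hklt⟩ = i := by
          apply Fin.ext
          show vB s r b ((b + 2) + (((i : ℕ) - s) - r)) = (i : ℕ)
          rw [vB_high s r (by omega) (by omega)]; omega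
        have hh := h ⟨(b + 2) + (((i : ℕ) - s) - r), hklt⟩
        rw [he] at hh
        rw [hh, if_neg (by simp; omega)]

/-! ### The total rank bound -/

lemma matrix_rank_le (hs : 2 ≤ s) :
    (Matrix.of fun u w : VV s r => if u + w ∈ S s r then (1 : ZMod 2) else 0).rank
      ≤ 2 ^ ((s - 1) * r) + 2 ^ ((s - 2) * r + s + 1) := by
  classical
  have hdecomp : (Matrix.of fun u w : VV s r => if u + w ∈ S s r then (1 : ZMod 2) else 0)
      = (Matrix.of fun u w : VV s r => if uZero s r (u + w) then (1 : ZMod 2) else 0)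
        + ∑ b ∈ Finset.range (s - 1),
            (Matrix.of fun u w : VV s r => if cosetB s r b (u + w) then (1 : ZMod 2) else 0) := by
    ext u w
    have hp := parity_key s r hs (u + w)
    simpa [Matrix.sum_apply, Matrix.add_apply, Matrix.of_apply] using hp
  rw [hdecomp]
  refine le_trans (rank_add_le' s r _ _) (Nat.add_le_add ?_ ?_)
  · exact rank_pattern s r (embW s r) (fun _ => 0) (uZero s r)
      (fun x => by simpa using uZero_iff_embW s r x)
  · refine le_trans (rank_sum_le s r _ _) ?_
    have hstep : ∀ b ∈ Finset.range (s - 1),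
        (Matrix.of fun u w : VV s r => if cosetB s r b (u + w) then (1 : ZMod 2) else 0).rank
          ≤ 2 ^ ((s - 2) * r + b + 2) := by
      intro b hb
      have hblt : b + 1 < s := by have := Finset.mem_range.mp hb; omega
      exact rank_pattern s r (embB s r hs hblt) (fun k => if (k : ℕ) = b + 1 then 1 else 0)
        (cosetB s r b) (fun x => cosetB_iff_embB s r hs hblt x)
    refine le_trans (Finset.sum_le_sum hstep) ?_
    have hgeom : ∀ m : ℕ, ∑ b ∈ Finset.range m, 2 ^ ((s - 2) * r + b + 2)
        ≤ 2 ^ ((s - 2) * r + m + 2) := by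
      intro m
      induction m with
      | zero => simp
      | succ m ih =>
          rw [Finset.sum_range_succ]
          have hpow : 2 ^ ((s - 2) * r + (m + 1) + 2)
              = 2 ^ ((s - 2) * r + m + 2) + 2 ^ ((s - 2) * r + m + 2) := by
            rw [show (s - 2) * r + (m + 1) + 2 = ((s - 2) * r + m + 2) + 1 from by omega,
              pow_succ]
            omega
          omega
    refine le_trans (hgeom (s - 1)) ?_
    have he : (s - 2) * r + (s - 1) + 2 = (s - 2) * r + s + 1 := by omega
    rw [he]

/-! ### Connectivity: spanning decomposition -/

def projW (d : VV s r) : VV s r := fun i => if (i : ℕ) < s then d i else 0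

def projB (b : ℕ) (d : VV s r) : VV s r :=
  fun i => if inBlock s r b (i : ℕ) then d i else 0

lemma projW_uZero (d : VV s r) : uZero s r (projW s r d) := by
  intro i hi
  unfold projW
  rw [if_neg (by omega)]

lemma projB_supp (b : ℕ) (d : VV s r) :
    ∀ i : Fin (nn s r), ¬ inBlock s r b (i : ℕ) → projB s r b d i = 0 := by
  intro i hi
  unfold projB
  rw [if_neg hi]

lemma decomp (hr0 : 0 < r) (d : VV s r) :
    projW s r d + ∑ b ∈ Finset.range (s - 1), projB s r b d = d := by
  funext i
  rw [Pi.add_apply, Finset.sum_apply]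
  by_cases hi : (i : ℕ) < s
  · have h1 : projW s r d i = d i := if_pos hi
    have h2 : ∀ b ∈ Finset.range (s - 1), projB s r b d i = 0 := by
      intro b _
      refine projB_supp s r b d i ?_
      rintro ⟨hc, _⟩; omega
    rw [h1, Finset.sum_eq_zero h2, add_zero]
  · have hW0 : projW s r d i = 0 := if_neg hi
    have hilt : (i : ℕ) < (s - 1) * r + s := i.isLt
    have hdm : r * (((i : ℕ) - s) / r) + ((i : ℕ) - s) % r = (i : ℕ) - s :=
      Nat.div_add_mod _ r
    have hmlt : ((i : ℕ) - s) % r < r := Nat.mod_lt _ hr0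
    have hcomm : (((i : ℕ) - s) / r) * r = r * (((i : ℕ) - s) / r) := Nat.mul_comm _ _
    have hblock : inBlock s r (((i : ℕ) - s) / r) (i : ℕ) := by
      constructor
      · omega
      · omega
    have hb0lt : ((i : ℕ) - s) / r < s - 1 := by
      by_contra hcon
      push_neg at hcon
      have : (s - 1) * r ≤ (((i : ℕ) - s) / r) * r := Nat.mul_le_mul_right r hcon
      omega
    have hsum : (∑ b ∈ Finset.range (s - 1), projB s r b d i) =
        projB s r (((i : ℕ) - s) / r) d i := by
      refine Finset.sum_eq_single _ ?_ ?_
      · intro b _ hbne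
        refine projB_supp s r b d i ?_
        intro hbl
        exact hbne (inBlock_disj s r hbl hblock)
      · intro hcon
        exact absurd (Finset.mem_range.mpr hb0lt) hcon
    rw [hW0, hsum, zero_add]
    unfold projB
    rw [if_pos hblock]

end SCP

/-! ### The main theorem -/

open SCP in
theorem exists_high_rate_storage_codes (s r : ℕ) (hs : 2 ≤ s) (hr : 4 ≤ r) :
    ∃ S : Finset (Fin ((s - 1) * r + s) → ZMod 2),
      (0 : Fin ((s - 1) * r + s) → ZMod 2) ∈ S ∧
      (∀ G : SimpleGraph (Fin ((s - 1) * r + s) → ZMod 2),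
        (∀ u w, G.Adj u w ↔ u ≠ w ∧ u + w ∈ S) →
          G.Connected ∧ G.CliqueFree 3) ∧
      (Matrix.of fun u w => if u + w ∈ S then (1 : ZMod 2) else 0).rank ≤
        2 ^ ((s - 1) * r) + 2 ^ ((s - 2) * r + s + 1) ∧
      (Module.finrank (ZMod 2)
          (LinearMap.ker
            (Matrix.of fun u w => if u + w ∈ S then (1 : ZMod 2) else 0).mulVecLin) : ℝ) /
          2 ^ ((s - 1) * r + s) ≥
        1 - (2 : ℝ) ^ (-(s : ℤ)) - (2 : ℝ) ^ (-((r : ℤ) - 1)) := by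
  classical
  have hr0 : 0 < r := by omega
  refine ⟨SCP.S s r, ?_, ?_, ?_, ?_⟩
  · exact (mem_S s r).mpr (Or.inl rfl)
  · -- graph properties
    intro G hG
    constructor
    · -- Connected
      rw [SimpleGraph.connected_iff]
      refine ⟨?_, ⟨0⟩⟩
      -- reachability generators
      have hedge : ∀ g : VV s r, memS s r g → g ≠ 0 → ∀ x : VV s r, G.Reachable x (x + g) := by
        intro g hg hg0 x
        have hne : x ≠ x + g := by
          intro he
          apply hg0
          have : x + 0 = x + g := by rw [add_zero]; exact he
          exact (add_left_cancel this).symm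
        have hmem : x + (x + g) ∈ SCP.S s r := by
          have hxx : x + (x + g) = g := by
            rw [← add_assoc, vadd_self, zero_add]
          rw [hxx]
          exact (mem_S s r).mpr hg
        exact ((hG x (x + g)).mpr ⟨hne, hmem⟩).reachable
      have hadd : ∀ d e : VV s r, (∀ x : VV s r, G.Reachable x (x + d)) →
          (∀ x : VV s r, G.Reachable x (x + e)) → ∀ x : VV s r, G.Reachable x (x + (d + e)) := by
        intro d e hd he x
        have := (hd x).trans (he (x + d))
        rwa [add_assoc] at this
      have hzero : ∀ x : VV s r, G.Reachable x (x + (0 : VV s r)) := by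
        intro x; rw [add_zero]
      -- all uZero vectors reachable
      have hW : ∀ w : VV s r, uZero s r w → ∀ x : VV s r, G.Reachable x (x + w) := by
        intro w hw x
        rcases zmod2_cases (w (fin0 s r hs)) with h0 | h1
        · -- w 0 = 0 : write w = g0 + (g0 + w)
          by_cases hw0 : w = 0
          · rw [hw0]; exact hzero x
          set g0 : VV s r := fun i => if (i : ℕ) = 0 then 1 else 0 with hg0def
          have hg0L : level0 s r g0 := by
            constructor
            · intro i hi; rw [hg0def]; simp [hi]
            · intro i hi; rw [hg0def]; simp; omega
          have hg0ne : g0 ≠ 0 := by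
            intro hcon
            have := congrFun hcon (fin0 s r hs)
            rw [hg0def] at this
            simp [fin0] at this
          have hw'L : level0 s r (g0 + w) := by
            constructor
            · intro i hi
              have hif : i = fin0 s r hs := Fin.ext (by simp [fin0, hi])
              rw [Pi.add_apply, hif, h0, add_zero, hg0def]
              simp [fin0]
            · intro i hi
              rw [Pi.add_apply, hw i hi, add_zero, hg0def]
              simp; omega
          have hw'ne : g0 + w ≠ 0 := by
            intro hcon
            have := congrFun hcon (fin0 s r hs)
            rw [Pi.add_apply, h0, add_zero, hg0def] at this
            simp [fin0] at this
          have hsplit : w = g0 + (g0 + w) := by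
            rw [← add_assoc, vadd_self, zero_add]
          rw [hsplit]
          exact hadd _ _ (hedge g0 (Or.inr (Or.inl hg0L)) hg0ne)
            (hedge _ (Or.inr (Or.inl hw'L)) hw'ne) x
        · -- w 0 = 1 : w itself is level0
          have hwL : level0 s r w := by
            constructor
            · intro i hi
              have hif : i = fin0 s r hs := Fin.ext (by simp [fin0, hi])
              rw [hif]; exact h1
            · exact hw
          have hwne : w ≠ 0 := by
            intro hcon
            have := congrFun hcon (fin0 s r hs)
            rw [h1] at this
            exact zmod2_one_ne_zero this
          exact hedge w (Or.inr (Or.inl hwL)) hwne x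
      -- all block-supported vectors reachable
      have hB : ∀ b : ℕ, b + 1 < s → ∀ u : VV s r,
          (∀ i : Fin (nn s r), ¬ inBlock s r b (i : ℕ) → u i = 0) →
          ∀ x : VV s r, G.Reachable x (x + u) := by
        intro b hb u hsupp x
        by_cases hu0 : u = 0
        · rw [hu0]; exact hzero x
        -- two block coordinates
        have hi0lt : s + b * r + 0 < nn s r := block_coord_lt s r hb (by omega)
        have hi1lt : s + b * r + 1 < nn s r := block_coord_lt s r hb (by omega)
        set i0 : Fin (nn s r) := ⟨s + b * r + 0, hi0lt⟩ with hi0def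
        set i1 : Fin (nn s r) := ⟨s + b * r + 1, hi1lt⟩ with hi1def
        set d0 : VV s r := fun i => if i = i0 then 1 else 0 with hd0def
        set d1 : VV s r := fun i => if i = i1 then 1 else 0 with hd1def
        set eta : VV s r := if u = d0 then d1 else d0 with hetadef
        set tcv : VV s r := fun i => if i = tc s r b hb then 1 else 0 with htcdef
        have hi0B : inBlock s r b ((i0 : ℕ)) := by
          have hv : (i0 : ℕ) = s + b * r + 0 := rfl
          rw [hv]; exact ⟨by omega, by omega⟩
        have hi1B : inBlock s r b ((i1 : ℕ)) := by
          have hv : (i1 : ℕ) = s + b * r + 1 := rfl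
          rw [hv]; exact ⟨by omega, by omega⟩
        have hi01 : i0 ≠ i1 := by
          intro hcon
          have : (i0 : ℕ) = (i1 : ℕ) := by rw [hcon]
          simp [hi0def, hi1def] at this
        have heta_ne_u : eta ≠ u := by
          rw [hetadef]
          split
          · rename_i h
            rw [h]
            intro hcon
            have := congrFun hcon i0
            rw [hd1def, hd0def] at this
            simp [hi01, Ne.symm hi01] at this
          · rename_i h
            exact fun hcon => h hcon.symm
        have heta_supp : ∀ i : Fin (nn s r), ¬ inBlock s r b (i : ℕ) → eta i = 0 := by
          intro i hi
          have hni0 : i ≠ i0 := fun hcon => hi (by rw [hcon]; exact hi0B)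
          have hni1 : i ≠ i1 := fun hcon => hi (by rw [hcon]; exact hi1B)
          rw [hetadef]
          split <;> · first
            | (rw [hd1def]; simp [hni1])
            | (rw [hd0def]; simp [hni0])
        have heta_ne0 : eta ≠ 0 := by
          rw [hetadef]
          split
          · intro hcon
            have := congrFun hcon i1
            rw [hd1def] at this; simp at this
          · intro hcon
            have := congrFun hcon i0
            rw [hd0def] at this; simp at this
        -- tc coordinate facts
        have htc_not_block : ¬ inBlock s r b ((tc s r b hb : ℕ)) := by
          rintro ⟨hc, _⟩
          simp [tc] at hc
          omega
        have htc_lt_s : (tc s r b hb : ℕ) < s := by simp [tc]; omega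
        have hu_tc : u (tc s r b hb) = 0 := hsupp _ htc_not_block
        have heta_tc : eta (tc s r b hb) = 0 := heta_supp _ htc_not_block
        -- generic lvl construction
        have hlvl : ∀ v : VV s r, (∀ i : Fin (nn s r), ¬ inBlock s r b (i : ℕ) → v i = 0) →
            v ≠ 0 → lvl s r b (tcv + v) := by
          intro v hv hvne
          refine ⟨⟨?_, ?_, ?_⟩, ?_⟩
          · intro i hi
            have hni : i ≠ tc s r b hb := by
              intro hcon
              rw [hcon] at hi
              simp [tc] at hi
            have hnb : ¬ inBlock s r b (i : ℕ) := by
              rintro ⟨hc, _⟩; omega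
            rw [Pi.add_apply, hv i hnb, add_zero, htcdef]
            simp [hni]
          · intro i hi
            have hieq : i = tc s r b hb := Fin.ext (by simp [tc, hi])
            have hnb : ¬ inBlock s r b (i : ℕ) := by
              rintro ⟨hc, _⟩
              rw [hi] at hc
              omega
            rw [Pi.add_apply, hv i hnb, add_zero, htcdef]
            simp [hieq]
          · intro i hi hnb
            have hni : i ≠ tc s r b hb := by
              intro hcon
              rw [hcon] at hi
              simp [tc] at hi
              omega
            rw [Pi.add_apply, hv i hnb, add_zero, htcdef]
            simp [hni]
          · have : ∃ i : Fin (nn s r), v i ≠ 0 := by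
              by_contra hcon
              push_neg at hcon
              exact hvne (funext hcon)
            obtain ⟨i, hine⟩ := this
            have hib : inBlock s r b (i : ℕ) := by
              by_contra hnb
              exact hine (hv i hnb)
            refine ⟨i, hib, ?_⟩
            have hni : i ≠ tc s r b hb := by
              intro hcon
              rw [hcon] at hib
              exact htc_not_block hib
            rw [Pi.add_apply, htcdef]
            simp only [if_neg hni]
            rw [zero_add]
            exact hine
        -- x-vector = tcv + (u + eta), y-vector = tcv + eta
        have hueta_supp : ∀ i : Fin (nn s r), ¬ inBlock s r b (i : ℕ) → (u + eta) i = 0 := by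
          intro i hi
          rw [Pi.add_apply, hsupp i hi, heta_supp i hi, add_zero]
        have hueta_ne0 : u + eta ≠ 0 := by
          intro hcon
          exact heta_ne_u ((vadd_eq_zero_iff s r).mp hcon).symm
        have hx_lvl := hlvl (u + eta) hueta_supp hueta_ne0
        have hy_lvl := hlvl eta heta_supp heta_ne0
        have hxne0 : tcv + (u + eta) ≠ 0 := by
          intro hcon
          have := congrFun hcon (tc s r b hb)
          rw [Pi.add_apply, Pi.add_apply, hu_tc, heta_tc, add_zero, add_zero, htcdef] at this
          simp at this
        have hyne0 : tcv + eta ≠ 0 := by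
          intro hcon
          have := congrFun hcon (tc s r b hb)
          rw [Pi.add_apply, heta_tc, add_zero, htcdef] at this
          simp at this
        have hxy : (tcv + (u + eta)) + (tcv + eta) = u := by
          have h1 : (tcv + (u + eta)) + (tcv + eta) = (tcv + tcv) + ((eta + eta) + u) := by ring
          rw [h1, vadd_self, vadd_self, zero_add, zero_add]
        have := hadd _ _ (hedge _ (Or.inr (Or.inr ⟨b, hb, hx_lvl⟩)) hxne0)
          (hedge _ (Or.inr (Or.inr ⟨b, hb, hy_lvl⟩)) hyne0) x
        rwa [hxy] at this
      -- assemble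
      intro u v
      have hkey : ∀ d : VV s r, G.Reachable u (u + d) := by
        intro d
        rw [← decomp s r hr0 d]
        refine hadd _ _ (hW _ (projW_uZero s r d)) ?_ u
        refine Finset.sum_induction _ (fun v => ∀ x : VV s r, G.Reachable x (x + v))
          (fun a b ha hb => hadd a b ha hb) hzero ?_
        intro b hb
        exact hB b (by have := Finset.mem_range.mp hb; omega) _ (projB_supp s r b _)
      have := hkey (u + v)
      rwa [← add_assoc, vadd_self, zero_add] at this
    · -- CliqueFree 3
      intro t ht
      obtain ⟨x, y, z, hxy, hxz, hyz, rfl⟩ := Finset.card_eq_three.mp ht.card_eq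
      have hc := ht.isClique
      have haxy : G.Adj x y := hc (by simp) (by simp) hxy
      have haxz : G.Adj x z := hc (by simp) (by simp) hxz
      have hayz : G.Adj y z := hc (by simp) (by simp) hyz
      have hxyS : memS s r (x + y) := (mem_S s r).mp ((hG x y).mp haxy).2
      have hxzS : memS s r (x + z) := (mem_S s r).mp ((hG x z).mp haxz).2
      have hyzS : memS s r (y + z) := (mem_S s r).mp ((hG y z).mp hayz).2
      have hxy0 : x + y ≠ 0 := fun h => hxy ((vadd_eq_zero_iff s r).mp h)
      have hxz0 : x + z ≠ 0 := fun h => hxz ((vadd_eq_zero_iff s r).mp h)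
      have hne : x + y ≠ x + z := fun h => hyz (add_left_cancel h)
      have hsum : (x + y) + (x + z) = y + z := by
        have h1 : (x + y) + (x + z) = (x + x) + (y + z) := by ring
        rw [h1, vadd_self, zero_add]
      exact sum_free s r hs hxyS hxzS hxy0 hxz0 hne (by rwa [hsum])
  · -- rank bound
    exact matrix_rank_le s r hs
  · -- rate bound
    have hrank := matrix_rank_le s r hs
    set M : Matrix (VV s r) (VV s r) (ZMod 2) :=
      Matrix.of fun u w => if u + w ∈ SCP.S s r then (1 : ZMod 2) else 0 with hM
    have hdim : Module.finrank (ZMod 2) (VV s r → ZMod 2) = 2 ^ ((s - 1) * r + s) := by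
      rw [Module.finrank_fintype_fun_eq_card]
      rw [Fintype.card_fun]
      simp [ZMod.card]
    have hrr : M.rank = Module.finrank (ZMod 2) (LinearMap.range M.mulVecLin) := rfl
    have hrn := LinearMap.finrank_range_add_finrank_ker M.mulVecLin
    have hsum : M.rank + Module.finrank (ZMod 2) (LinearMap.ker M.mulVecLin)
        = 2 ^ ((s - 1) * r + s) := by
      rw [hrr, hrn, hdim]
    have hNpos : (0 : ℝ) < 2 ^ ((s - 1) * r + s) := by positivity
    rw [ge_iff_le, le_div_iff₀ hNpos]
    have hsumR : (M.rank : ℝ) + (Module.finrank (ZMod 2) (LinearMap.ker M.mulVecLin) : ℝ)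
        = 2 ^ ((s - 1) * r + s) := by
      exact_mod_cast congrArg (Nat.cast : ℕ → ℝ) hsum
    have hAr : (M.rank : ℝ) ≤ 2 ^ ((s - 1) * r) + 2 ^ ((s - 2) * r + s + 1) := by
      exact_mod_cast hrank
    have e1 : (2 : ℝ) ^ (-(s : ℤ)) * 2 ^ ((s - 1) * r + s) = 2 ^ ((s - 1) * r) := by
      have h1 : (2 : ℝ) ^ (-(s : ℤ)) = ((2 : ℝ) ^ (s : ℕ))⁻¹ := by
        rw [zpow_neg, zpow_natCast]
      rw [h1, pow_add]
      have h2 : ((2 : ℝ) ^ (s : ℕ)) ≠ 0 := by positivity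
      field_simp
    have e2 : (2 : ℝ) ^ (-((r : ℤ) - 1)) * 2 ^ ((s - 1) * r + s) = 2 ^ ((s - 2) * r + s + 1) := by
      have hc : -((r : ℤ) - 1) = -(((r - 1 : ℕ) : ℤ)) := by
        have : ((r - 1 : ℕ) : ℤ) = (r : ℤ) - 1 := by
          have : 1 ≤ r := by omega
          push_cast [this]
          ring
        rw [this]
      have h1 : (2 : ℝ) ^ (-((r : ℤ) - 1)) = ((2 : ℝ) ^ ((r - 1) : ℕ))⁻¹ := by
        rw [hc, zpow_neg, zpow_natCast]
      have hexp : ((s - 2) * r + s + 1) + (r - 1) = (s - 1) * r + s := by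
        have := sub_mul_aux s r hs
        omega
      rw [h1, ← hexp, pow_add]
      have h2 : ((2 : ℝ) ^ ((r - 1) : ℕ)) ≠ 0 := by positivity
      field_simp
    have hexpand : (1 - (2 : ℝ) ^ (-(s : ℤ)) - (2 : ℝ) ^ (-((r : ℤ) - 1))) * 2 ^ ((s - 1) * r + s)
        = 2 ^ ((s - 1) * r + s) - 2 ^ ((s - 1) * r) - 2 ^ ((s - 2) * r + s + 1) := by
      rw [sub_mul, sub_mul, one_mul, e1, e2]
    rw [hexpand]
    linarith
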